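/- Cost recovery for the VLB non-merchant storage over a cycle: assume (i) within each market interval the local (intra-storage) quantities chosen by model (4) yield non-negative revenue −sum_t λ*_t p^{C,loc}_t ≥ 0, and (ii) every unit moved to the inter-storage at price λ is only ever discharged in a later interval at a market price ≥ λ (guaranteed because the inter-storage bids price λ and discharge is voluntary, i.e., p^{D,e}_{v,t} > 0 in an optimal solution implies λ_t ≥ S_v), and (iii) the inter-storage is eventually empty at the end of the cycle. Then the storage system's total surplus over the cycle, sum over intervals of sum_t λ_t (discharge_t − charge_t) Δt, is non-negative. -/
import Mathlib


open Finset

/-- Cost recovery for the VLB non-merchant storage over a cycle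
(Δt = 1). A cycle consists of `K` market intervals of `T` periods each, with market
prices `lam k t`. In each interval the intra-storage charge `pCa` decomposes (model (4))
into a local part `loc` and a moved part `mov` (`pCa = loc + mov`), and the inter-storage
discharge `dis` decomposes via `D u w`, the energy moved (charged) at period `u` and
discharged at period `w`. Assume:
(i) in every interval the local quantities have non-negative revenue;
(ii) every unit moved at price `lam u` is only discharged at a market price ≥ `lam u`
    (voluntary discharge: the inter-storage bids its saved price);
(iii) the inter-storage is eventually empty: all moved energy is discharged within
    the cycle.
Then the storage's total surplus over the cycle,
`∑_{k,t} λ_{k,t} (discharge_{k,t} − charge_{k,t})`, is non-negative. -/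
theorem storage_cost_recovery_over_cycle (K T : ℕ)
    (lam pCa loc mov dis : Fin K → Fin T → ℝ)
    (D : (Fin K × Fin T) → (Fin K × Fin T) → ℝ)
    (hdecomp : ∀ k t, loc k t + mov k t = pCa k t)
    (hlocrev : ∀ k, 0 ≤ -∑ t, lam k t * loc k t)
    (hD0 : ∀ u w, 0 ≤ D u w)
    (hdis : ∀ k t, dis k t = ∑ u, D u (k, t))
    (hprice : ∀ u w, 0 < D u w → lam u.1 u.2 ≤ lam w.1 w.2)
    (hempty : ∀ u, ∑ w, D u w = mov u.1 u.2) :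
    0 ≤ ∑ k, ∑ t, lam k t * (dis k t - pCa k t) := by
  have key : ∑ k, ∑ t, lam k t * (dis k t - pCa k t)
      = (∑ k, -∑ t, lam k t * loc k t)
        + ∑ u : Fin K × Fin T, ∑ w : Fin K × Fin T,
            (lam w.1 w.2 - lam u.1 u.2) * D u w := by
    have hpt : ∀ k t, lam k t * (dis k t - pCa k t)
        = -(lam k t * loc k t) + (lam k t * dis k t - lam k t * mov k t) := by
      intro k t; rw [← hdecomp k t]; ring
    have h1 : ∑ k, ∑ t, lam k t * (dis k t - pCa k t)
        = (∑ k, -∑ t, lam k t * loc k t)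
          + ((∑ k, ∑ t, lam k t * dis k t) - ∑ k, ∑ t, lam k t * mov k t) := by
      simp only [hpt, Finset.sum_add_distrib, Finset.sum_sub_distrib,
        Finset.sum_neg_distrib]
    rw [h1]
    congr 1
    have hd : ∑ w : Fin K × Fin T, ∑ u : Fin K × Fin T, lam w.1 w.2 * D u w
        = ∑ k, ∑ t, lam k t * dis k t := by
      rw [Fintype.sum_prod_type]
      apply Finset.sum_congr rfl; intro k _
      apply Finset.sum_congr rfl; intro t _
      rw [hdis k t, Finset.mul_sum]
    have hm : ∑ u : Fin K × Fin T, ∑ w : Fin K × Fin T, lam u.1 u.2 * D u w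
        = ∑ k, ∑ t, lam k t * mov k t := by
      rw [Fintype.sum_prod_type]
      apply Finset.sum_congr rfl; intro k _
      apply Finset.sum_congr rfl; intro t _
      rw [← Finset.mul_sum, hempty (k, t)]
    rw [← hd, ← hm, Finset.sum_comm (f := fun w u => lam w.1 w.2 * D u w),
      ← Finset.sum_sub_distrib]
    apply Finset.sum_congr rfl; intro u _
    rw [← Finset.sum_sub_distrib]
    apply Finset.sum_congr rfl; intro w _
    ring
  rw [key]
  apply add_nonneg
  · exact Finset.sum_nonneg fun k _ => hlocrev k
  · apply Finset.sum_nonneg; intro u _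
    apply Finset.sum_nonneg; intro w _
    rcases lt_or_eq_of_le (hD0 u w) with h | h
    · exact mul_nonneg (sub_nonneg.2 (hprice u w h)) h.le
    · rw [← h, mul_zero]
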